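/- Given a neutral trajectory datum, the function w(t) = Σ_{j=1}^n q_j(t) δh_j(t) is affine in t on all of [0, ∞): for every t ≥ 0, w(t) = w(0) + t · Σ_{j=1}^n δh_j(0) v_j(0). In particular the slope Σ_{j=1}^n δh_j(t) v_j(t) is the same on every inter-collision interval. -/

import Mathlib

open Matrix Filter Set

/-- The collision matrix `R_i` acting on coordinates `i` and `i+1` (0-based),
with 2×2 block `((γ, 1−γ), (1+γ, −γ))`, and agreeing with the identity elsewhere. -/
def collMat (n : ℕ) (i : ℕ) (γ : ℝ) : Matrix (Fin n) (Fin n) ℝ :=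
  Matrix.of fun j k =>
    if j.val = i ∧ k.val = i then γ
    else if j.val = i ∧ k.val = i + 1 then 1 - γ
    else if j.val = i + 1 ∧ k.val = i then 1 + γ
    else if j.val = i + 1 ∧ k.val = i + 1 then -γ
    else if j = k then 1 else 0

/-- A neutral trajectory datum for the falling-ball system with `n ≥ 2` particles of
positive masses `m`: a strictly increasing sequence of collision times `0 < t_1 < t_2 < ⋯`
tending to `∞`, collision types `ty k ∈ {0, 1, …, n−1}` (where `ty k = 0` is a floor
collision and `ty k = i + 1` is a collision of the 0-based particles `i` and `i + 1`),
a bound `C > 0`, and functions `q, v, δh : [0, ∞) → ℝⁿ` satisfying conditions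
(a)–(f) of the paper.  The fields `vminus k`, `dhminus k` record the left limits
`v(t_k⁻)`, `δh(t_k⁻)`. -/
lemma sum_two {n : ℕ} (f : Fin n → ℝ) (a b : Fin n) (hab : a ≠ b)
    (h : ∀ j, j ≠ a → j ≠ b → f j = 0) : ∑ j, f j = f a + f b := by
  rw [← Finset.sum_pair hab]
  refine (Finset.sum_subset (Finset.subset_univ _) ?_).symm
  intro x _ hx
  simp only [Finset.mem_insert, Finset.mem_singleton, not_or] at hx
  exact h x hx.1 hx.2

lemma collMat_mulVec {n : ℕ} (i : ℕ) (hi : i + 1 < n) (γ : ℝ) (y : Fin n → ℝ) (k : Fin n) :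
    (collMat n i γ *ᵥ y) k =
      if k.val = i then γ * y ⟨i, by omega⟩ + (1 - γ) * y ⟨i + 1, hi⟩
      else if k.val = i + 1 then (1 + γ) * y ⟨i, by omega⟩ + (-γ) * y ⟨i + 1, hi⟩
      else y k := by
  have hii : (⟨i, by omega⟩ : Fin n) ≠ ⟨i + 1, hi⟩ := by simp [Fin.ext_iff]
  show (∑ j, collMat n i γ k j * y j) = _
  split_ifs with h1 h2
  · rw [sum_two _ ⟨i, by omega⟩ ⟨i + 1, hi⟩ hii]
    · simp [collMat, h1, Fin.ext_iff]
    · intro j hj1 hj2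
      have e1 : ¬ j.val = i := fun h => hj1 (by simp [Fin.ext_iff, h])
      have e2 : ¬ j.val = i + 1 := fun h => hj2 (by simp [Fin.ext_iff, h])
      have e3 : ¬ k = j := fun h => e1 (h ▸ h1)
      simp [collMat, h1, e1, e2, e3]
  · rw [sum_two _ ⟨i, by omega⟩ ⟨i + 1, hi⟩ hii]
    · simp [collMat, h1, h2, Fin.ext_iff]
    · intro j hj1 hj2
      have e1 : ¬ j.val = i := fun h => hj1 (by simp [Fin.ext_iff, h])
      have e2 : ¬ j.val = i + 1 := fun h => hj2 (by simp [Fin.ext_iff, h])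
      have e3 : ¬ k = j := fun h => e2 (h ▸ h2)
      simp [collMat, h1, e1, e2, e3]
  · have hks : ∑ j, collMat n i γ k j * y j = collMat n i γ k k * y k := by
      refine Finset.sum_eq_single_of_mem k (Finset.mem_univ k) ?_
      intro j _ hj
      have e3 : ¬ k = j := fun h => hj h.symm
      simp [collMat, h1, h2, e3]
    rw [hks]
    simp [collMat, h1, h2]

lemma collMat_invol {n : ℕ} (i : ℕ) (hi : i + 1 < n) (γ : ℝ) (y : Fin n → ℝ) :
    collMat n i γ *ᵥ (collMat n i γ *ᵥ y) = y := by
  funext k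
  rw [collMat_mulVec i hi, collMat_mulVec i hi, collMat_mulVec i hi]
  have hne : ¬ (i + 1 = i) := by omega
  simp only [Fin.val_mk, if_pos rfl, if_neg hne]
  split_ifs with h1 h2
  · have : k = ⟨i, by omega⟩ := Fin.ext h1
    rw [this]; ring
  · have : k = ⟨i + 1, hi⟩ := Fin.ext h2
    rw [this]; ring
  · rw [collMat_mulVec i hi, if_neg h1, if_neg h2]

lemma collMat_fixed {n : ℕ} (i : ℕ) (hi : i + 1 < n) (γ : ℝ) (q : Fin n → ℝ)
    (hq : q ⟨i, by omega⟩ = q ⟨i + 1, hi⟩) :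
    collMat n i γ *ᵥ q = q := by
  funext k
  rw [collMat_mulVec i hi]
  split_ifs with h1 h2
  · have : k = ⟨i, by omega⟩ := Fin.ext h1
    rw [this, hq]; ring
  · have : k = ⟨i + 1, hi⟩ := Fin.ext h2
    rw [this, ← hq]; ring
  · rfl

lemma dot_coll {n : ℕ} (i : ℕ) (hi : i + 1 < n) (γ : ℝ) (x y : Fin n → ℝ) :
    ((collMat n i γ)ᵀ *ᵥ x) ⬝ᵥ (collMat n i γ *ᵥ y) = x ⬝ᵥ y := by
  rw [Matrix.mulVec_transpose, ← Matrix.dotProduct_mulVec, collMat_invol i hi]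

lemma dot_fixed {n : ℕ} (i : ℕ) (hi : i + 1 < n) (γ : ℝ) (q x : Fin n → ℝ)
    (hq : q ⟨i, by omega⟩ = q ⟨i + 1, hi⟩) :
    q ⬝ᵥ ((collMat n i γ)ᵀ *ᵥ x) = q ⬝ᵥ x := by
  rw [Matrix.dotProduct_mulVec, Matrix.vecMul_transpose, collMat_fixed i hi γ q hq]

structure NeutralDatum (n : ℕ) (m : Fin n → ℝ) : Type where
  hn : 2 ≤ n
  hm : ∀ j, 0 < m j
  /-- collision times (0-indexed: `tc 0` is the paper's `t_1`) -/
  tc : ℕ → ℝ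
  /-- collision types -/
  ty : ℕ → ℕ
  C : ℝ
  q : ℝ → Fin n → ℝ
  v : ℝ → Fin n → ℝ
  dh : ℝ → Fin n → ℝ
  /-- the left limit `v(t_k⁻)` -/
  vminus : ℕ → Fin n → ℝ
  /-- the left limit `δh(t_k⁻)` -/
  dhminus : ℕ → Fin n → ℝ
  tc_pos : 0 < tc 0
  tc_mono : StrictMono tc
  tc_tendsto : Tendsto tc atTop atTop
  ty_lt : ∀ k, ty k < n
  C_pos : 0 < C
  /-- (a) `q` is continuous on `[0, ∞)` -/
  q_cont : ∀ j, ContinuousOn (fun t => q t j) (Ici 0)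
  /-- (a) `0 ≤ q_j(t) ≤ C` -/
  q_bdd : ∀ j, ∀ t, 0 ≤ t → 0 ≤ q t j ∧ q t j ≤ C
  /-- (b) between collisions, `q' = v` -/
  q_deriv : ∀ t, 0 ≤ t → t ∉ range tc → ∀ j,
    HasDerivWithinAt (fun s => q s j) (v t j) (Ici 0) t
  /-- (b) between collisions, `v' = -1` componentwise -/
  v_deriv : ∀ t, 0 ≤ t → t ∉ range tc → ∀ j,
    HasDerivWithinAt (fun s => v s j) (-1) (Ici 0) t
  /-- (b) between collisions, `δh` is constant -/
  dh_deriv : ∀ t, 0 ≤ t → t ∉ range tc → ∀ j,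
    HasDerivWithinAt (fun s => dh s j) 0 (Ici 0) t
  /-- (c) `v` is right-continuous -/
  v_rc : ∀ t, 0 ≤ t → ∀ j, Tendsto (fun s => v s j) (nhdsWithin t (Ici t)) (nhds (v t j))
  /-- (c) `δh` is right-continuous -/
  dh_rc : ∀ t, 0 ≤ t → ∀ j, Tendsto (fun s => dh s j) (nhdsWithin t (Ici t)) (nhds (dh t j))
  /-- (c) `v` has left limit `vminus k` at `tc k` -/
  v_ll : ∀ k j, Tendsto (fun s => v s j) (nhdsWithin (tc k) (Iio (tc k))) (nhds (vminus k j))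
  /-- (c) `δh` has left limit `dhminus k` at `tc k` -/
  dh_ll : ∀ k j, Tendsto (fun s => dh s j) (nhdsWithin (tc k) (Iio (tc k))) (nhds (dhminus k j))
  /-- (d) collision of particles `i`, `i+1` (0-based): `q_i = q_{i+1}`,
  `v⁺ = R_i v⁻` and `δh⁺ = R_iᵀ δh⁻` -/
  coll_pair : ∀ k, ∀ i : ℕ, ∀ hi : i + 1 < n, ty k = i + 1 →
    q (tc k) ⟨i, Nat.lt_of_succ_lt hi⟩ = q (tc k) ⟨i + 1, hi⟩ ∧
    v (tc k) = (collMat n i ((m ⟨i, Nat.lt_of_succ_lt hi⟩ - m ⟨i + 1, hi⟩) /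
        (m ⟨i, Nat.lt_of_succ_lt hi⟩ + m ⟨i + 1, hi⟩))) *ᵥ vminus k ∧
    dh (tc k) = (collMat n i ((m ⟨i, Nat.lt_of_succ_lt hi⟩ - m ⟨i + 1, hi⟩) /
        (m ⟨i, Nat.lt_of_succ_lt hi⟩ + m ⟨i + 1, hi⟩)))ᵀ *ᵥ dhminus k
  /-- (e) floor collision: `q_1 = 0`, `v_1⁺ = -v_1⁻`, the other velocities are
  unchanged, `δh⁺ = δh⁻` and `δh_1 = 0` -/
  coll_floor : ∀ k, ty k = 0 →
    q (tc k) ⟨0, by omega⟩ = 0 ∧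
    v (tc k) ⟨0, by omega⟩ = -vminus k ⟨0, by omega⟩ ∧
    (∀ j : Fin n, j ≠ ⟨0, by omega⟩ → v (tc k) j = vminus k j) ∧
    dh (tc k) = dhminus k ∧
    dh (tc k) ⟨0, by omega⟩ = 0
  /-- (f) `∑ j, δh_j(t) = 0` -/
  dh_sum : ∀ t, 0 ≤ t → ∑ j, dh t j = 0

lemma core_const {f : ℝ → ℝ} {a b L : ℝ} (hab : a < b)
    (hderiv : ∀ t ∈ Ioo a b, HasDerivAt f 0 t)
    (hrc : Tendsto f (nhdsWithin a (Ioi a)) (nhds (f a)))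
    (hll : Tendsto f (nhdsWithin b (Iio b)) (nhds L))
    (hjump : f b = L) :
    ∀ t ∈ Icc a b, f t = f a := by
  have stepA : ∀ x y : ℝ, a < x → x ≤ y → y < b → f y = f x := by
    intro x y hx hxy hy
    have hc : ContinuousOn f (Icc x y) := fun z hz =>
      ((hderiv z ⟨lt_of_lt_of_le hx hz.1, lt_of_le_of_lt hz.2 hy⟩).continuousAt).continuousWithinAt
    have hd : ∀ z ∈ Ico x y, HasDerivWithinAt f 0 (Ici z) z := fun z hz =>
      (hderiv z ⟨lt_of_lt_of_le hx hz.1, lt_trans hz.2 hy⟩).hasDerivWithinAt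
    exact constant_of_has_deriv_right_zero hc hd y (right_mem_Icc.2 hxy)
  have stepB : ∀ t ∈ Ioo a b, f t = f a := by
    intro t ht
    have hev : ∀ᶠ x in nhdsWithin a (Ioi a), f x = f t := by
      filter_upwards [Ioo_mem_nhdsGT_of_mem (left_mem_Ico.2 ht.1)] with x hx
      exact (stepA x t hx.1 hx.2.le ht.2).symm
    have h1 : Tendsto f (nhdsWithin a (Ioi a)) (nhds (f t)) :=
      Tendsto.congr' (EventuallyEq.symm hev) tendsto_const_nhds
    exact tendsto_nhds_unique h1 hrc
  have stepC : f b = f a := by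
    have hev : ∀ᶠ x in nhdsWithin b (Iio b), f x = f a := by
      filter_upwards [Ioo_mem_nhdsLT_of_mem (right_mem_Ioc.2 hab)] with x hx
      exact stepB x hx
    have h1 : Tendsto f (nhdsWithin b (Iio b)) (nhds (f a)) :=
      Tendsto.congr' (EventuallyEq.symm hev) tendsto_const_nhds
    rw [hjump]
    exact tendsto_nhds_unique hll h1
  intro t ht
  rcases eq_or_lt_of_le ht.1 with h | h
  · rw [← h]
  · rcases eq_or_lt_of_le ht.2 with h2 | h2
    · rw [h2]; exact stepC
    · exact stepB t ⟨h, h2⟩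

lemma global_const {n : ℕ} {m : Fin n → ℝ} (D : NeutralDatum n m) (f : ℝ → ℝ)
    (hderiv : ∀ t, 0 < t → t ∉ range D.tc → HasDerivAt f 0 t)
    (hrc : ∀ t, 0 ≤ t → Tendsto f (nhdsWithin t (Ioi t)) (nhds (f t)))
    (hcoll : ∀ k, ∃ L, Tendsto f (nhdsWithin (D.tc k) (Iio (D.tc k))) (nhds L) ∧ f (D.tc k) = L) :
    ∀ t, 0 ≤ t → f t = f 0 := by
  have key : ∀ k, ∀ t ∈ Icc (0 : ℝ) (D.tc k), f t = f 0 := by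
    intro k
    induction k with
    | zero =>
      obtain ⟨L, hL, hj⟩ := hcoll 0
      refine core_const D.tc_pos ?_ (hrc 0 le_rfl) hL hj
      intro t ht
      refine hderiv t ht.1 ?_
      rintro ⟨j, rfl⟩
      exact absurd (D.tc_mono.monotone (Nat.zero_le j)) (not_le.2 ht.2)
    | succ k ih =>
      intro t ht
      rcases le_or_gt t (D.tc k) with h | h
      · exact ih t ⟨ht.1, h⟩
      · have h0k : 0 < D.tc k := lt_of_lt_of_le D.tc_pos (D.tc_mono.monotone (Nat.zero_le k))
        obtain ⟨L, hL, hj⟩ := hcoll (k + 1)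
        have hfree : ∀ s ∈ Ioo (D.tc k) (D.tc (k + 1)), s ∉ range D.tc := by
          rintro s hs ⟨j, rfl⟩
          rcases le_or_gt j k with hjk | hjk
          · exact absurd (D.tc_mono.monotone hjk) (not_le.2 hs.1)
          · exact absurd (D.tc_mono.monotone hjk) (not_le.2 hs.2)
        have := core_const (D.tc_mono (Nat.lt_succ_self k))
          (fun s hs => hderiv s (lt_trans h0k hs.1) (hfree s hs))
          (hrc _ h0k.le) hL hj t ⟨h.le, ht.2⟩
        rw [this]
        exact ih (D.tc k) ⟨h0k.le, le_rfl⟩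
  intro t ht
  obtain ⟨k, hk⟩ : ∃ k, t ≤ D.tc k := (D.tc_tendsto.eventually (eventually_ge_atTop t)).exists
  exact key k t ⟨ht, hk⟩

lemma s_jump {n : ℕ} {m : Fin n → ℝ} (D : NeutralDatum n m) (k : ℕ) :
    ∑ j, D.dh (D.tc k) j * D.v (D.tc k) j = ∑ j, D.dhminus k j * D.vminus k j := by
  rcases Nat.eq_zero_or_eq_succ_pred (D.ty k) with h | h
  · obtain ⟨_, hv0, hvj, hdh, hdh0⟩ := D.coll_floor k h
    have h0 : (0 : ℕ) < n := by have := D.hn; omega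
    rw [hdh] at hdh0 ⊢
    refine Finset.sum_congr rfl fun j _ => ?_
    by_cases hj : j = (⟨0, h0⟩ : Fin n)
    · subst hj
      rw [show D.dhminus k ⟨0, h0⟩ = 0 from hdh0]
      ring
    · rw [hvj j (fun hc => hj (by rw [hc]))]
  · set i := D.ty k - 1 with hidef
    have hty : D.ty k = i + 1 := h
    have hi : i + 1 < n := hty ▸ D.ty_lt k
    obtain ⟨hq, hv, hdh⟩ := D.coll_pair k i hi hty
    show D.dh (D.tc k) ⬝ᵥ D.v (D.tc k) = D.dhminus k ⬝ᵥ D.vminus k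
    rw [hdh, hv]
    exact dot_coll i hi _ _ _

lemma w_jump {n : ℕ} {m : Fin n → ℝ} (D : NeutralDatum n m) (k : ℕ) :
    ∑ j, D.q (D.tc k) j * D.dh (D.tc k) j = ∑ j, D.q (D.tc k) j * D.dhminus k j := by
  rcases Nat.eq_zero_or_eq_succ_pred (D.ty k) with h | h
  · obtain ⟨_, _, _, hdh, _⟩ := D.coll_floor k h
    rw [hdh]
  · set i := D.ty k - 1 with hidef
    have hty : D.ty k = i + 1 := h
    have hi : i + 1 < n := hty ▸ D.ty_lt k
    obtain ⟨hq, hv, hdh⟩ := D.coll_pair k i hi hty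
    show D.q (D.tc k) ⬝ᵥ D.dh (D.tc k) = D.q (D.tc k) ⬝ᵥ D.dhminus k
    rw [hdh]
    exact dot_fixed i hi _ _ _ hq

/-- given a neutral trajectory datum, `w(t) = ∑ j, q_j(t) δh_j(t)` is affine
in `t` on `[0, ∞)`: `w(t) = w(0) + t * ∑ j, δh_j(0) v_j(0)`.  In particular the slope
`∑ j, δh_j(t) v_j(t)` is the same on every inter-collision interval. -/
theorem neutral_w_affine (n : ℕ) (m : Fin n → ℝ) (D : NeutralDatum n m) :
    (∀ t : ℝ, 0 ≤ t →
      ∑ j, D.q t j * D.dh t j =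
        (∑ j, D.q 0 j * D.dh 0 j) + t * ∑ j, D.dh 0 j * D.v 0 j) ∧
    ∀ t : ℝ, 0 ≤ t → ∑ j, D.dh t j * D.v t j = ∑ j, D.dh 0 j * D.v 0 j := by
  have hs : ∀ t : ℝ, 0 ≤ t → (∑ j, D.dh t j * D.v t j) = ∑ j, D.dh 0 j * D.v 0 j := by
    refine global_const D (fun t => ∑ j, D.dh t j * D.v t j) ?_ ?_ ?_
    · intro t ht hmem
      have hdh : ∀ j : Fin n, HasDerivAt (fun u => D.dh u j) 0 t :=
        fun j => (D.dh_deriv t ht.le hmem j).hasDerivAt (Ici_mem_nhds ht)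
      have hv : ∀ j : Fin n, HasDerivAt (fun u => D.v u j) (-1) t :=
        fun j => (D.v_deriv t ht.le hmem j).hasDerivAt (Ici_mem_nhds ht)
      have hsum : HasDerivAt (fun u => ∑ j, D.dh u j * D.v u j)
          (∑ j, (0 * D.v t j + D.dh t j * (-1))) t :=
        HasDerivAt.fun_sum fun j _ => (hdh j).mul (hv j)
      have h0 : (∑ j : Fin n, (0 * D.v t j + D.dh t j * (-1))) = 0 := by
        simp only [zero_mul, zero_add, mul_neg_one]
        rw [Finset.sum_neg_distrib, D.dh_sum t ht.le, neg_zero]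
      rwa [h0] at hsum
    · intro t ht
      exact tendsto_finset_sum _ fun j _ =>
        Tendsto.mul ((D.dh_rc t ht j).mono_left (nhdsWithin_mono t Ioi_subset_Ici_self))
          ((D.v_rc t ht j).mono_left (nhdsWithin_mono t Ioi_subset_Ici_self))
    · intro k
      exact ⟨∑ j, D.dhminus k j * D.vminus k j,
        tendsto_finset_sum _ fun j _ => (D.dh_ll k j).mul (D.v_ll k j), s_jump D k⟩
  set c : ℝ := ∑ j, D.dh 0 j * D.v 0 j with hc
  have hg : ∀ t : ℝ, 0 ≤ t →
      (∑ j, D.q t j * D.dh t j) - c * t = (∑ j, D.q 0 j * D.dh 0 j) - c * 0 := by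
    refine global_const D (fun t => (∑ j, D.q t j * D.dh t j) - c * t) ?_ ?_ ?_
    · intro t ht hmem
      have hq : ∀ j : Fin n, HasDerivAt (fun u => D.q u j) (D.v t j) t :=
        fun j => (D.q_deriv t ht.le hmem j).hasDerivAt (Ici_mem_nhds ht)
      have hdh : ∀ j : Fin n, HasDerivAt (fun u => D.dh u j) 0 t :=
        fun j => (D.dh_deriv t ht.le hmem j).hasDerivAt (Ici_mem_nhds ht)
      have hw : HasDerivAt (fun u => ∑ j, D.q u j * D.dh u j)
          (∑ j, (D.v t j * D.dh t j + D.q t j * 0)) t :=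
        HasDerivAt.fun_sum fun j _ => (hq j).mul (hdh j)
      have hct : HasDerivAt (fun u : ℝ => c * u) c t := by
        simpa using (hasDerivAt_id t).const_mul c
      have h0 : (∑ j, (D.v t j * D.dh t j + D.q t j * 0)) = c := by
        simp only [mul_zero, add_zero]
        rw [show (∑ j, D.v t j * D.dh t j) = ∑ j, D.dh t j * D.v t j from
          Finset.sum_congr rfl fun j _ => mul_comm _ _]
        exact hs t ht.le
      have hfin := hw.sub hct
      rw [h0, sub_self] at hfin
      exact hfin
    · intro t ht
      refine Tendsto.sub (tendsto_finset_sum _ fun j _ => Tendsto.mul ?_ ?_) ?_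
      · exact Tendsto.mono_left (D.q_cont j t (mem_Ici.mpr ht))
          (nhdsWithin_mono t (fun x hx => le_trans ht hx.le))
      · exact (D.dh_rc t ht j).mono_left (nhdsWithin_mono t Ioi_subset_Ici_self)
      · exact (((continuous_const.mul continuous_id).tendsto t).mono_left nhdsWithin_le_nhds)
    · intro k
      have hk0 : 0 < D.tc k := lt_of_lt_of_le D.tc_pos (D.tc_mono.monotone (Nat.zero_le k))
      refine ⟨(∑ j, D.q (D.tc k) j * D.dhminus k j) - c * D.tc k, ?_, ?_⟩
      · refine Tendsto.sub (tendsto_finset_sum _ fun j _ => Tendsto.mul ?_ (D.dh_ll k j)) ?_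
        · exact (((D.q_cont j).continuousAt (Ici_mem_nhds hk0)).tendsto).mono_left
            nhdsWithin_le_nhds
        · exact (((continuous_const.mul continuous_id).tendsto _).mono_left nhdsWithin_le_nhds)
      · show (∑ j, D.q (D.tc k) j * D.dh (D.tc k) j) - c * D.tc k = _
        rw [w_jump D k]
  refine ⟨fun t ht => ?_, fun t ht => hs t ht⟩
  have h1 := hg t ht
  rw [mul_zero, sub_zero] at h1
  have : c * t = t * c := mul_comm _ _
  linarith [h1]
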